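/- The set Par_N = {(a,b) ∈ Z_N × Z_N : av(a,b) = 0} of parental pairs of zero is exactly the disjoint union of the two families {(⟨−k⟩_N, k) : 0 ≤ k ≤ ⌊(N−1)/2⌋} and {(⟨−k⟩_N, k+1) : 0 ≤ k ≤ ⌊(N−2)/2⌋} (where ⟨−k⟩_N = 0 for k = 0 and ⟨−k⟩_N = N − k for k ≥ 1); in particular Par_N has exactly N elements. -/

import Mathlib

namespace Rhythm

/-- `a +_N b`, addition on `Z_N = {0,…,N−1}`. -/
def addN (N a b : ℕ) : ℕ := (a + b) % N

/-- `a −_N b`, subtraction on `Z_N = {0,…,N−1}`. -/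
def subN (N a b : ℕ) : ℕ := (a + N - b) % N

/-- The discrete average `av(a,b) = a +_N ⌊(b −_N a)/2⌋`. -/
def av (N a b : ℕ) : ℕ := addN N a (subN N b a / 2)

/-- The cyclic interval `[a,b]_{Z_N}`. -/
def cyclicIcc (N a b : ℕ) : Finset ℕ :=
  if a ≤ b then Finset.Icc a b else Finset.Icc a (N - 1) ∪ Finset.Icc 0 b

/-- The half-open cyclic interval `[a,b)_{Z_N} = [a,b]_{Z_N} \ {b}`. -/
def cyclicIco (N a b : ℕ) : Finset ℕ := (cyclicIcc N a b).erase b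

/-- The half-open cyclic interval `(a,b]_{Z_N} = [a,b]_{Z_N} \ {a}`. -/
def cyclicIoc (N a b : ℕ) : Finset ℕ := (cyclicIcc N a b).erase a

/-- Cyclic successor `⟨i+1⟩_n` on `Fin n`. -/
def csucc {n : ℕ} (i : Fin n) : Fin n := ⟨(i.val + 1) % n, Nat.mod_lt _ i.pos⟩

/-- Cyclic predecessor `⟨i−1⟩_n` on `Fin n`. -/
def cpred {n : ℕ} (i : Fin n) : Fin n := ⟨(i.val + (n - 1)) % n, Nat.mod_lt _ i.pos⟩

/-- `a ∈ R_N^n`: entries in `Z_N`, pairwise distinct, and `Σ_i (a_{⟨i+1⟩_n} −_N a_i) = N`. -/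
def IsRhythm (N : ℕ) {n : ℕ} (a : Fin n → ℕ) : Prop :=
  (∀ i, a i < N) ∧ Function.Injective a ∧ (∑ i, subN N (a (csucc i)) (a i)) = N

/-- The discrete average transformation `Rav`. -/
def Rav (N : ℕ) {n : ℕ} (a : Fin n → ℕ) : Fin n → ℕ := fun i => av N (a i) (a (csucc i))

/-- The rotation `rot(a_0,…,a_{n−1}) = (a_{n−1},a_0,…,a_{n−2})`. -/
def rot {n : ℕ} (a : Fin n → ℕ) : Fin n → ℕ := fun i => a (cpred i)

/-- The translation `tr(a_0,…,a_{n−1}) = (a_0 +_N 1,…,a_{n−1} +_N 1)`. -/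
def tr (N : ℕ) {n : ℕ} (a : Fin n → ℕ) : Fin n → ℕ := fun i => addN N (a i) 1

/-- `j` is the jumping number of `a`: `a_{⟨j−1⟩_n} > a_j` and `a_{⟨k−1⟩_n} < a_k` for `k ≠ j`. -/
def IsJump {n : ℕ} (a : Fin n → ℕ) (j : Fin n) : Prop :=
  a (cpred j) > a j ∧ ∀ k, k ≠ j → a (cpred k) < a k

/-- The map `Iav`: for `n ≥ 2` it is `Rav` if `a` is proper (`N − a_{n−1} > a_0`) and
`rot ∘ Rav` otherwise; for `n ≤ 1` it is the identity. -/
def Iav (N : ℕ) {n : ℕ} (a : Fin n → ℕ) : Fin n → ℕ :=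
  if h : 2 ≤ n then
    if N - a ⟨n - 1, by omega⟩ > a ⟨0, by omega⟩ then Rav N a else rot (Rav N a)
  else a

/-- The support of a Boolean vector `v ∈ F_2^N`. -/
def supp (N : ℕ) (v : Fin N → ZMod 2) : Finset (Fin N) :=
  Finset.univ.filter fun i => v i = 1

/-- `BtoI(v)`: the increasing enumeration of the support of `v`. -/
def BtoI (N : ℕ) (v : Fin N → ZMod 2) : Fin (supp N v).card → ℕ :=
  fun i => (((supp N v).orderIsoOfFin rfl) i).1.val

/-- `ItoB(b)`: the characteristic vector of the set of entries of the tuple `b`. -/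
def ItoB (N : ℕ) {n : ℕ} (b : Fin n → ℕ) : Fin N → ZMod 2 :=
  fun i => if ∃ k, b k = i.val then 1 else 0

/-- The Boolean average `Bav = ItoB ∘ Iav ∘ BtoI : B_N → B_N`. -/
def Bav (N : ℕ) (v : Fin N → ZMod 2) : Fin N → ZMod 2 :=
  ItoB N (Iav N (BtoI N v))

/-- The cyclic shift `Btr(v_0,…,v_{N−1}) = (v_{N−1},v_0,…,v_{N−2})`. -/
def Btr (N : ℕ) (v : Fin N → ZMod 2) : Fin N → ZMod 2 := fun i => v (cpred i)

/-- `Par_N`: the set of parental pairs of zero, i.e. pairs `(a,b) ∈ Z_N × Z_N` with `av(a,b) = 0`. -/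
def Par (N : ℕ) : Finset (ℕ × ℕ) :=
  (Finset.range N ×ˢ Finset.range N).filter fun p => av N p.1 p.2 = 0

/-- The least absolute remainder `φ_N(i) ∈ Z_{N,±}` of `i ∈ Z_N`. -/
def toSigned (N : ℕ) (i : Fin N) : ℤ :=
  if (i : ℕ) ≤ N / 2 then (i : ℤ) else (i : ℤ) - N

/-- `G_N(y) = Bav_N^0(v)` where `v_{⟨j⟩_N} = 1 + y_j` for `j ∈ Z_{N,±}`. -/
def G (N : ℕ) (y : ℤ → ZMod 2) : ZMod 2 :=
  if h : 0 < N then Bav N (fun i => 1 + y (toSigned N i)) ⟨0, h⟩ else 0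

end Rhythm

open Rhythm in
/-- The set `Par_N = {(a,b) ∈ Z_N × Z_N : av(a,b) = 0}` of parental pairs of zero is exactly
the disjoint union of `{(⟨−k⟩_N, k) : 0 ≤ k ≤ ⌊(N−1)/2⌋}` and
`{(⟨−k⟩_N, k+1) : 0 ≤ k ≤ ⌊(N−2)/2⌋}`; in particular `Par_N` has exactly `N` elements. -/
theorem Par_structure (N : ℕ) (hN : 3 ≤ N) :
    Par N = (Finset.range ((N - 1) / 2 + 1)).image (fun k => ((N - k) % N, k)) ∪
            (Finset.range ((N - 2) / 2 + 1)).image (fun k => ((N - k) % N, k + 1)) ∧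
    Disjoint ((Finset.range ((N - 1) / 2 + 1)).image (fun k => ((N - k) % N, k)))
             ((Finset.range ((N - 2) / 2 + 1)).image (fun k => ((N - k) % N, k + 1))) ∧
    (Par N).card = N := by

  have hmod : ∀ k : ℕ, k < N → (N - k) % N = if k = 0 then 0 else N - k := by
    intro k hk
    split
    · subst ‹k = 0›; simp
    · exact Nat.mod_eq_of_lt (by omega)
  have main : Par N = (Finset.range ((N - 1) / 2 + 1)).image (fun k => ((N - k) % N, k)) ∪
            (Finset.range ((N - 2) / 2 + 1)).image (fun k => ((N - k) % N, k + 1)) := by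
    ext p
    rw [Par, Finset.mem_filter]
    simp only [Par, av, addN, subN, Finset.mem_filter, Finset.mem_product, Finset.mem_range,
      Finset.mem_union, Finset.mem_image, Prod.ext_iff]
    constructor
    · rintro ⟨⟨ha, hb⟩, h⟩
      rcases le_or_gt p.1 p.2 with hab | hab
      · have e1 : (p.2 + N - p.1) % N = p.2 - p.1 := by
          rw [show p.2 + N - p.1 = (p.2 - p.1) + N by omega, Nat.add_mod_right,
            Nat.mod_eq_of_lt (by omega)]
        rw [e1, Nat.mod_eq_of_lt (by omega)] at h
        have h1 : p.1 = 0 := by omega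
        have h2 : p.2 ≤ 1 := by omega
        rcases le_or_gt p.2 0 with h3 | h3
        · left; exact ⟨0, by omega, by rw [hmod 0 (by omega), if_pos rfl]; omega, by omega⟩
        · right; exact ⟨0, by omega, by rw [hmod 0 (by omega), if_pos rfl]; omega, by omega⟩
      · have e1 : (p.2 + N - p.1) % N = p.2 + N - p.1 := Nat.mod_eq_of_lt (by omega)
        rw [e1] at h
        have hv : p.1 + (p.2 + N - p.1) / 2 = N := by
          rcases Nat.lt_or_ge (p.1 + (p.2 + N - p.1) / 2) N with h3 | h3
          · rw [Nat.mod_eq_of_lt h3] at h; omega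
          · rw [Nat.mod_eq_sub_mod h3, Nat.mod_eq_of_lt (by omega)] at h; omega
        set k := N - p.1 with hk
        have hk1 : 1 ≤ k := by omega
        have hkN : k < N := by omega
        have hb2 : p.2 = k ∨ p.2 = k + 1 := by omega
        rcases hb2 with hb2 | hb2
        · left; exact ⟨k, by omega, by rw [hmod k hkN]; split <;> omega, by omega⟩
        · right; exact ⟨k, by omega, by rw [hmod k hkN]; split <;> omega, by omega⟩
    · rintro (⟨k, hk, h1, h2⟩ | ⟨k, hk, h1, h2⟩) <;> rw [hmod k (by omega)] at h1
      · rcases Nat.eq_zero_or_pos k with h0 | h0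
        · subst h0
          rw [if_pos rfl] at h1
          refine ⟨⟨by omega, by omega⟩, ?_⟩
          rw [show p.2 + N - p.1 = N by omega, Nat.mod_self, ← h1]
          simp
        · rw [if_neg (by omega)] at h1
          have hp1 : p.1 = N - k := by omega
          have e1 : (p.2 + N - p.1) % N = 2 * k := by
            rw [show p.2 + N - p.1 = 2 * k by omega]
            exact Nat.mod_eq_of_lt (by omega)
          refine ⟨⟨by omega, by omega⟩, ?_⟩
          rw [e1, show p.1 + 2 * k / 2 = N by omega, Nat.mod_self]
      · rcases Nat.eq_zero_or_pos k with h0 | h0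
        · subst h0
          rw [if_pos rfl] at h1
          refine ⟨⟨by omega, by omega⟩, ?_⟩
          rw [show p.2 + N - p.1 = 1 + N by omega, Nat.add_mod_right,
            Nat.mod_eq_of_lt (show 1 < N by omega), ← h1]
          simp
        · rw [if_neg (by omega)] at h1
          have e1 : (p.2 + N - p.1) % N = 2 * k + 1 := by
            rw [show p.2 + N - p.1 = 2 * k + 1 by omega]
            exact Nat.mod_eq_of_lt (by omega)
          refine ⟨⟨by omega, by omega⟩, ?_⟩
          rw [e1, show p.1 + (2 * k + 1) / 2 = N by omega, Nat.mod_self]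
  have hdisj : Disjoint ((Finset.range ((N - 1) / 2 + 1)).image (fun k => ((N - k) % N, k)))
             ((Finset.range ((N - 2) / 2 + 1)).image (fun k => ((N - k) % N, k + 1))) := by
    rw [Finset.disjoint_left]
    rintro p hp1 hp2
    simp only [Finset.mem_image, Finset.mem_range, Prod.ext_iff] at hp1 hp2
    obtain ⟨k, hk, hk1, hk2⟩ := hp1
    obtain ⟨j, hj, hj1, hj2⟩ := hp2
    rw [hmod k (by omega)] at hk1
    rw [hmod j (by omega)] at hj1
    revert hk1 hj1
    split <;> split <;> omega
  refine ⟨main, hdisj, ?_⟩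
  rw [main, Finset.card_union_of_disjoint hdisj,
    Finset.card_image_of_injOn (fun a _ b _ h => by simpa using congrArg Prod.snd h),
    Finset.card_image_of_injOn (fun a _ b _ h => by simpa using congrArg Prod.snd h),
    Finset.card_range, Finset.card_range]
  omega
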